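/- Let I₀(z) = ∑_{n=0}^∞ (z/2)^{2n} / (n!)² denote the modified Bessel function of the first kind of order 0. Then for all real a, p with 0 < a < p, ∫_0^∞ e^{−px} · I₀(ax/2)² dx = (1/p) · ∑_{n=0}^∞ binom(2n, n)² · (a/(4p))^{2n}. -/

import Mathlib

open MeasureTheory Set

/-- The modified Bessel function of the first kind of order 0,
`I₀(z) = ∑ (z/2)^{2n}/(n!)²`. -/
noncomputable def besselI0 (z : ℝ) : ℝ :=
  ∑' n : ℕ, (z / 2) ^ (2 * n) / ((n.factorial : ℝ)) ^ 2

lemma besselI0_summable_norm (z : ℝ) :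
    Summable fun n : ℕ => ‖(z / 2) ^ (2 * n) / ((n.factorial : ℝ)) ^ 2‖ := by
  refine Summable.of_nonneg_of_le (fun n => norm_nonneg _) (fun n => ?_)
    (Real.summable_pow_div_factorial ((z / 2) ^ 2))
  have h1 : (1 : ℝ) ≤ (n.factorial : ℝ) := by
    exact_mod_cast Nat.one_le_iff_ne_zero.2 n.factorial_ne_zero
  rw [Real.norm_eq_abs, abs_div, abs_pow, pow_mul, sq_abs, abs_pow, Nat.abs_cast]
  gcongr
  exact le_self_pow₀ h1 two_ne_zero

lemma antidiag_sum (n : ℕ) :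
    ∑ q ∈ Finset.HasAntidiagonal.antidiagonal n,
        (1 : ℝ) / ((q.1.factorial : ℝ) ^ 2 * (q.2.factorial : ℝ) ^ 2)
      = (Nat.choose (2 * n) n : ℝ) / ((n.factorial : ℝ)) ^ 2 := by
  have hv : ((2 * n).choose n : ℝ)
      = ∑ q ∈ Finset.HasAntidiagonal.antidiagonal n, (n.choose q.1 : ℝ) * (n.choose q.2 : ℝ) := by
    rw [two_mul, Nat.add_choose_eq]; push_cast; rfl
  rw [hv, Finset.sum_div]
  refine Finset.sum_congr rfl fun q hq => ?_
  rw [Finset.HasAntidiagonal.mem_antidiagonal] at hq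
  have h1 : q.1 ≤ n := Nat.le.intro hq
  have h2 : q.2 ≤ n := Nat.le.intro (by rw [add_comm]; exact hq)
  have e1 : n - q.1 = q.2 := by omega
  have e2 : n - q.2 = q.1 := by omega
  rw [Nat.cast_choose ℝ h1, Nat.cast_choose ℝ h2, e1, e2]
  have f1 : (q.1.factorial : ℝ) ≠ 0 := Nat.cast_ne_zero.2 (Nat.factorial_ne_zero _)
  have f2 : (q.2.factorial : ℝ) ≠ 0 := Nat.cast_ne_zero.2 (Nat.factorial_ne_zero _)
  have fn : (n.factorial : ℝ) ≠ 0 := Nat.cast_ne_zero.2 (Nat.factorial_ne_zero _)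
  field_simp

lemma sq_besselI0 (z : ℝ) :
    (besselI0 z) ^ 2
      = ∑' n : ℕ, (Nat.choose (2 * n) n : ℝ) * (z / 2) ^ (2 * n) / ((n.factorial : ℝ)) ^ 2 := by
  have hs := besselI0_summable_norm z
  rw [besselI0, sq, tsum_mul_tsum_eq_tsum_sum_antidiagonal_of_summable_norm hs hs]
  refine tsum_congr fun n => ?_
  have : ∀ q ∈ Finset.HasAntidiagonal.antidiagonal n,
      (z / 2) ^ (2 * q.1) / ((q.1.factorial : ℝ)) ^ 2 *
        ((z / 2) ^ (2 * q.2) / ((q.2.factorial : ℝ)) ^ 2)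
        = (z / 2) ^ (2 * n) *
          ((1 : ℝ) / ((q.1.factorial : ℝ) ^ 2 * (q.2.factorial : ℝ) ^ 2)) := by
    intro q hq
    rw [Finset.HasAntidiagonal.mem_antidiagonal] at hq
    rw [div_mul_div_comm, ← pow_add, ← Nat.mul_add, hq]
    ring
  rw [Finset.sum_congr rfl this, ← Finset.mul_sum, antidiag_sum]
  ring


lemma integral_pow_exp (p : ℝ) (hp : 0 < p) (n : ℕ) :
    ∫ x : ℝ in Ioi 0, x ^ n * Real.exp (-p * x)
      = (1 / p) ^ (n + 1) * (n.factorial : ℝ) := by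
  have h := Real.integral_rpow_mul_exp_neg_mul_Ioi
    (a := (n : ℝ) + 1) (r := p) (by positivity) hp
  rw [show ((n : ℝ) + 1) - 1 = (n : ℝ) by ring, Real.Gamma_nat_eq_factorial,
    show ((n : ℝ) + 1) = ((n + 1 : ℕ) : ℝ) by push_cast; ring, Real.rpow_natCast] at h
  rw [← h]
  refine setIntegral_congr_fun measurableSet_Ioi (fun x hx => ?_)
  rw [Real.rpow_natCast, neg_mul]

/-- The Laplace transform of `I₀(ax/2)²` is `(1/p)·(2/π)·K(a/p)`. -/
theorem laplace_besselI0_sq (a p : ℝ) (ha : 0 < a) (hap : a < p) :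
    ∫ x : ℝ in Ioi 0, Real.exp (-p * x) * (besselI0 (a * x / 2)) ^ 2
      = (1 / p) * ∑' n : ℕ, ((Nat.choose (2 * n) n : ℝ)) ^ 2 * (a / (4 * p)) ^ (2 * n) := by
  have hp : 0 < p := ha.trans hap
  set c : ℕ → ℝ := fun n =>
    (Nat.choose (2 * n) n : ℝ) / ((n.factorial : ℝ)) ^ 2 * (a / 4) ^ (2 * n) with hc
  set f : ℕ → ℝ → ℝ := fun n x => c n * (x ^ (2 * n) * Real.exp (-p * x)) with hf
  set w : ℕ → ℝ := fun n =>
    (1 / p) * (((Nat.choose (2 * n) n : ℝ)) ^ 2 * (a / (4 * p)) ^ (2 * n)) with hw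
  have hc0 : ∀ n, 0 ≤ c n := fun n =>
    mul_nonneg (by positivity) ((even_two_mul n).pow_nonneg _)
  have hw0 : ∀ n, 0 ≤ w n := fun n =>
    mul_nonneg (by positivity) (mul_nonneg (by positivity) ((even_two_mul n).pow_nonneg _))
  have hnn : ∀ n, ∀ x ∈ Ioi 0, 0 ≤ f n x := by
    intro n x hx
    exact mul_nonneg (hc0 n)
      (mul_nonneg (pow_nonneg (le_of_lt hx) _) (Real.exp_pos _).le)
  -- pointwise expansion
  have hpt : ∀ x : ℝ, Real.exp (-p * x) * (besselI0 (a * x / 2)) ^ 2 = ∑' n, f n x := by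
    intro x
    rw [sq_besselI0, ← tsum_mul_left]
    refine tsum_congr fun n => ?_
    have h4 : (a * x / 2 / 2) = (a / 4) * x := by ring
    simp only [hf, hc, h4, mul_pow]
    ring
  -- value of each term's integral
  have hval : ∀ n, ∫ x in Ioi 0, f n x = w n := by
    intro n
    rw [hf]
    simp only
    rw [integral_const_mul, integral_pow_exp p hp (2 * n)]
    have h1 : ((2 * n).factorial : ℝ) =
        (Nat.choose (2 * n) n : ℝ) * (n.factorial : ℝ) * (n.factorial : ℝ) := by
      have := Nat.choose_mul_factorial_mul_factorial (show n ≤ 2 * n by omega)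
      rw [show 2 * n - n = n by omega] at this
      exact_mod_cast this.symm
    have hr : (a / (4 * p)) ^ (2 * n) = (a / 4) ^ (2 * n) * (1 / p) ^ (2 * n) := by
      rw [← mul_pow]
      congr 1
      field_simp
    have hfn : ((n.factorial : ℝ)) ^ 2 ≠ 0 := by positivity
    rw [hc, hw]
    simp only
    rw [h1, hr, pow_succ]
    field_simp
    ring_nf
    field_simp
  -- summability of w
  have hws : Summable w := by
    have hr1 : (a / p) ^ 2 < 1 := by
      apply pow_lt_one₀ (by positivity) ((div_lt_one hp).2 hap)
      norm_num
    have hg : Summable fun n : ℕ => (1 / p) * ((a / p) ^ 2) ^ n :=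
      (summable_geometric_of_lt_one (by positivity) hr1).mul_left _
    refine Summable.of_nonneg_of_le hw0 (fun n => ?_) hg
    rw [hw]
    simp only
    have hb : (Nat.choose (2 * n) n : ℝ) ≤ 4 ^ n := by
      exact_mod_cast (Nat.choose_le_choose n (Nat.le_succ (2 * n))).trans
        (Nat.choose_middle_le_pow n)
    have hrr : (0 : ℝ) ≤ (a / (4 * p)) ^ (2 * n) := (even_two_mul n).pow_nonneg _
    have key : ((Nat.choose (2 * n) n : ℝ)) ^ 2 * (a / (4 * p)) ^ (2 * n)
        ≤ ((a / p) ^ 2) ^ n := by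
      calc ((Nat.choose (2 * n) n : ℝ)) ^ 2 * (a / (4 * p)) ^ (2 * n)
          ≤ ((4 : ℝ) ^ n) ^ 2 * (a / (4 * p)) ^ (2 * n) := by
            gcongr
        _ = ((a / p) ^ 2) ^ n := by
            rw [pow_mul, ← pow_mul, mul_comm n 2, pow_mul, ← mul_pow, ← mul_pow]
            congr 2
            field_simp
    have := mul_le_mul_of_nonneg_left key (le_of_lt (one_div_pos.2 hp))
    exact this
  -- integrability of each term
  have hint : ∀ n, IntegrableOn (f n) (Ioi 0) := by
    intro n
    have hbase : IntegrableOn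
        (fun x : ℝ => x ^ ((2 * n : ℕ) : ℝ) * Real.exp (-p * x ^ (1 : ℝ))) (Ioi 0) :=
      integrableOn_rpow_mul_exp_neg_mul_rpow
        (lt_of_lt_of_le neg_one_lt_zero (Nat.cast_nonneg _)) zero_lt_one hp
    have heq : EqOn (fun x : ℝ => x ^ ((2 * n : ℕ) : ℝ) * Real.exp (-p * x ^ (1 : ℝ)))
        (fun x : ℝ => x ^ (2 * n) * Real.exp (-p * x)) (Ioi 0) := by
      intro x hx
      simp only [Real.rpow_natCast, Real.rpow_one]
    exact ((hbase.congr_fun heq measurableSet_Ioi).const_mul (c n))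
  -- norm integrals
  have hnorm : ∀ n, ∫ x in Ioi 0, ‖f n x‖ = w n := by
    intro n
    rw [← hval n]
    refine setIntegral_congr_fun measurableSet_Ioi fun x hx => ?_
    rw [Real.norm_eq_abs, abs_of_nonneg (hnn n x hx)]
  -- swap sum and integral
  simp only [hpt]
  rw [MeasureTheory.integral_tsum (fun n => (hint n).aestronglyMeasurable) ?_]
  · rw [tsum_congr hval, hw, tsum_mul_left]
  · have hlt : ∀ n : ℕ, ∫⁻ x in Ioi 0, ‖f n x‖ₑ = ENNReal.ofReal (w n) := by
      intro n
      rw [← ofReal_integral_norm_eq_lintegral_enorm (hint n), hnorm n]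
    rw [tsum_congr hlt, ← ENNReal.ofReal_tsum_of_nonneg hw0 hws]
    exact ENNReal.ofReal_ne_top
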